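/- Let N, m be natural numbers, c : Fin (N+1) → EuclideanSpace ℝ (Fin m), and A : Fin (N+1) → Fin (N+1) → Matrix (Fin m) (Fin m) ℝ such that A j n = 0 whenever j > n + 1 (one-step residual structure), and A n n is invertible for every n. Suppose λ : Fin (N+1) → EuclideanSpace ℝ (Fin m) satisfies λ_N = ((A N N)ᵀ)⁻¹ *ᵥ c_N and, for every n < N, λ_n = ((A n n)ᵀ)⁻¹ *ᵥ (c_n - (A (n+1) n)ᵀ *ᵥ λ_{n+1}). Then λ solves the adjoint equations: for every n, c_n = ∑_{j=n}^N (A j n)ᵀ *ᵥ λ_j. -/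

import Mathlib

/-- One-step adjoint recursion: with one-step residual structure
(`A j n = 0` for `j > n + 1`) and invertible diagonal Jacobians, the simplified
backward recursion `λₙ = ((A n n)ᵀ)⁻¹ (cₙ - (A (n+1) n)ᵀ λ_{n+1})` produces
multipliers solving the adjoint equations `cₙ = ∑_{j ≥ n} (A j n)ᵀ λ_j`. -/
theorem one_step_backward_recursion_solves_adjoint {N m : ℕ}
    (c : Fin (N + 1) → EuclideanSpace ℝ (Fin m))
    (A : Fin (N + 1) → Fin (N + 1) → Matrix (Fin m) (Fin m) ℝ)
    (hA0 : ∀ j n : Fin (N + 1), (n : ℕ) + 1 < (j : ℕ) → A j n = 0)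
    (hA : ∀ n, IsUnit (A n n))
    (lam : Fin (N + 1) → EuclideanSpace ℝ (Fin m))
    (hlamN : lam (Fin.last N) =
      (((A (Fin.last N) (Fin.last N)).transpose)⁻¹).mulVec (c (Fin.last N)))
    (hlam : ∀ n : Fin (N + 1), ∀ h : (n : ℕ) < N,
      lam n = (((A n n).transpose)⁻¹).mulVec
        (c n - (id (WithLp.toLp 2 (((A ⟨(n : ℕ) + 1, by omega⟩ n).transpose).mulVec
          (lam ⟨(n : ℕ) + 1, by omega⟩))) : EuclideanSpace ℝ (Fin m)))) :
    ∀ n, c n = (∑ j ∈ Finset.Ici n,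
      WithLp.toLp 2 (((A j n).transpose).mulVec (lam j)) : EuclideanSpace ℝ (Fin m)) := by
  intro n
  have hdet : ∀ k : Fin (N + 1), IsUnit ((A k k).transpose).det := by
    intro k
    rw [Matrix.det_transpose]
    exact (Matrix.isUnit_iff_isUnit_det _).mp (hA k)
  have hcancel : ∀ k (v : EuclideanSpace ℝ (Fin m)),
      ((A k k).transpose).mulVec ((((A k k).transpose)⁻¹).mulVec v) = v := by
    intro k v
    rw [Matrix.mulVec_mulVec, Matrix.mul_nonsing_inv _ (hdet k), Matrix.one_mulVec]
  by_cases h : (n : ℕ) < N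
  · set n' : Fin (N + 1) := ⟨(n : ℕ) + 1, by omega⟩ with hn'
    have hne : n ≠ n' := by
      intro he
      have := congrArg Fin.val he
      simp [hn'] at this
    have hsub : ({n, n'} : Finset (Fin (N + 1))) ⊆ Finset.Ici n := by
      intro j hj
      simp only [Finset.mem_insert, Finset.mem_singleton] at hj
      rcases hj with rfl | rfl
      · exact Finset.mem_Ici.mpr le_rfl
      · exact Finset.mem_Ici.mpr (by simp [Fin.le_def, hn'])
    have hzero : ∀ j ∈ Finset.Ici n, j ∉ ({n, n'} : Finset (Fin (N + 1))) →
        WithLp.toLp 2 (((A j n).transpose).mulVec (lam j)) = 0 := by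
      intro j hj hj'
      simp only [Finset.mem_insert, Finset.mem_singleton, not_or] at hj'
      have hle : n ≤ j := Finset.mem_Ici.mp hj
      have : (n : ℕ) + 1 < (j : ℕ) := by
        rcases hj' with ⟨h1, h2⟩
        have hvne1 : (j : ℕ) ≠ (n : ℕ) := fun he => h1 (Fin.ext he.symm).symm
        have hvne2 : (j : ℕ) ≠ (n : ℕ) + 1 := fun he => h2 (Fin.ext (by simp [hn', he]))
        have := Fin.le_def.mp hle
        omega
      rw [hA0 j n this]
      simp [Matrix.mulVec]
    rw [← Finset.sum_subset hsub hzero, Finset.sum_pair hne]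
    rw [hlam n h, hcancel]
    simp [hn']
  · have hn : n = Fin.last N := Fin.ext (by have := n.isLt; simp [Fin.last]; omega)
    subst hn
    have : Finset.Ici (Fin.last N) = {Fin.last N} := by
      ext j
      simp only [Finset.mem_Ici, Finset.mem_singleton]
      exact ⟨fun hj => le_antisymm (Fin.le_last j) hj, fun hj => hj ▸ le_rfl⟩
    rw [this, Finset.sum_singleton, hlamN, hcancel]
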